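/- Fix r_1 < ... < r_k and n > r_k², and let M_n = ⟨n, n+r_1, ..., n+r_k⟩. For β ∈ M_n, define the factorization graph ∇_β with vertex set Z(β) = {z ∈ ℕ^{k+1} : z_0 n + Σ_{i=1}^k z_i (n + r_i) = β}, two factorizations adjacent when they share a common atom (i.e., there is an index at which both are positive). If β is a Betti element (∇_β disconnected) and z, z' ∈ Z(β) lie in different connected components of ∇_β with |z| > |z'|, then z_0 > 0 and z'_k > 0. -/

import Mathlib

open Finset

/-- Length of a factorization. -/
def vlen {m : ℕ} (z : Fin m → ℕ) : ℕ := ∑ i, z i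

/-- Factorization homomorphism of `M_n = ⟨n, n+r_1, ..., n+r_k⟩`. -/
def piM (k n : ℕ) (r : Fin (k + 1) → ℕ) (z : Fin (k + 2) → ℕ) : ℕ :=
  z 0 * n + ∑ i : Fin (k + 1), z i.succ * (n + r i)

/-- Two factorizations of `β` lie in the same connected component of the factorization
graph `∇_β`: there is a path of factorizations of `β`, consecutive ones sharing a
common positive coordinate. -/
def SameComp {m : ℕ} (π : (Fin m → ℕ) → ℕ) (β : ℕ) :
    (Fin m → ℕ) → (Fin m → ℕ) → Prop :=
  Relation.ReflTransGen (fun a b => π a = β ∧ π b = β ∧ ∃ i, 0 < a i ∧ 0 < b i)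

/-- `β` is a Betti element: its factorization graph is disconnected. -/
def IsBetti {m : ℕ} (π : (Fin m → ℕ) → ℕ) (β : ℕ) : Prop :=
  ∃ z z', π z = β ∧ π z' = β ∧ ¬ SameComp π β z z'

/-- The map `Φ_n` on pairs of factorizations. -/
def Phi (k : ℕ) (p : (Fin (k + 2) → ℕ) × (Fin (k + 2) → ℕ)) :
    (Fin (k + 2) → ℕ) × (Fin (k + 2) → ℕ) :=
  if vlen p.2 < vlen p.1 then
    (p.1 + (vlen p.1 - vlen p.2) • Pi.single (0 : Fin (k + 2)) 1,
     p.2 + (vlen p.1 - vlen p.2) • Pi.single (Fin.last (k + 1)) 1)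
  else if vlen p.1 < vlen p.2 then
    (p.1 + (vlen p.2 - vlen p.1) • Pi.single (Fin.last (k + 1)) 1,
     p.2 + (vlen p.2 - vlen p.1) • Pi.single (0 : Fin (k + 2)) 1)
  else p

/-- The congruence generated by a set of relations `ρ`. -/
inductive CongGen {m : ℕ} (ρ : Set ((Fin m → ℕ) × (Fin m → ℕ))) :
    (Fin m → ℕ) → (Fin m → ℕ) → Prop
  | of {z z'} : (z, z') ∈ ρ → CongGen ρ z z'
  | refl (z) : CongGen ρ z z
  | symm {z z'} : CongGen ρ z z' → CongGen ρ z' z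
  | trans {x y z} : CongGen ρ x y → CongGen ρ y z → CongGen ρ x z
  | add {z z'} (u) : CongGen ρ z z' → CongGen ρ (z + u) (z' + u)

/-- `ρ` is a presentation for the monoid with factorization homomorphism `π`. -/
def IsPres {m : ℕ} (π : (Fin m → ℕ) → ℕ)
    (ρ : Set ((Fin m → ℕ) × (Fin m → ℕ))) : Prop :=
  (∀ p ∈ ρ, π p.1 = π p.2) ∧ ∀ z z', CongGen ρ z z' ↔ π z = π z'

/-- `ρ` is a minimal presentation. -/
def IsMinPres {m : ℕ} (π : (Fin m → ℕ) → ℕ)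
    (ρ : Set ((Fin m → ℕ) × (Fin m → ℕ))) : Prop :=
  IsPres π ρ ∧ ∀ ρ' ⊆ ρ, IsPres π ρ' → ρ' = ρ

/-- Primitivity of `M_n`: the gcd of the generators is 1. -/
def Primitive (k n : ℕ) (r : Fin (k + 1) → ℕ) : Prop :=
  Nat.gcd n (Finset.univ.gcd fun i : Fin (k + 1) => n + r i) = 1

/-- Distance between two factorizations. -/
def fdist {m : ℕ} (z z' : Fin m → ℕ) : ℕ :=
  max (∑ i, (z i - min (z i) (z' i))) (∑ i, (z' i - min (z i) (z' i)))


open Finset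

section core
variable {m : ℕ}

def Wsum (w v : Fin m → ℕ) : ℕ := ∑ i, v i * w i

def prefS (x : Fin m → ℕ) (t : ℕ) : ℕ :=
  ∑ j ∈ Finset.univ.filter (fun j : Fin m => j.val < t), x j

def takeVec (x : Fin m → ℕ) (c : ℕ) : Fin m → ℕ := fun i => min (x i) (c - prefS x i.val)

lemma prefS_mono (x : Fin m → ℕ) : Monotone (prefS x) := by
  intro s t h
  apply Finset.sum_le_sum_of_subset
  intro j hj
  simp only [Finset.mem_filter, Finset.mem_univ, true_and] at *
  omega

lemma prefS_zero (x : Fin m → ℕ) : prefS x 0 = 0 := by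
  simp [prefS]

lemma prefS_top (x : Fin m → ℕ) : prefS x m = ∑ i, x i := by
  unfold prefS
  congr 1
  apply Finset.filter_true_of_mem
  intro j _
  exact j.isLt

lemma prefS_succ (x : Fin m → ℕ) (i : Fin m) :
    prefS x (i.val + 1) = prefS x i.val + x i := by
  unfold prefS
  have : Finset.univ.filter (fun j : Fin m => j.val < i.val + 1)
      = insert i (Finset.univ.filter (fun j : Fin m => j.val < i.val)) := by
    ext j
    simp only [Finset.mem_filter, Finset.mem_insert, Finset.mem_univ, true_and, Fin.ext_iff]
    omega
  rw [this, Finset.sum_insert (by simp)]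
  omega

lemma takeVec_le (x : Fin m → ℕ) (c : ℕ) : takeVec x c ≤ x := by
  intro i; exact min_le_left _ _

lemma takeVec_mono (x : Fin m → ℕ) {c c' : ℕ} (h : c ≤ c') :
    takeVec x c ≤ takeVec x c' := by
  intro i
  simp only [takeVec]
  omega

lemma takeVec_eq (x : Fin m → ℕ) (c : ℕ) (i : Fin m) :
    takeVec x c i = min (prefS x (i.val + 1)) c - min (prefS x i.val) c := by
  rw [prefS_succ]
  unfold takeVec
  omega

lemma sum_takeVec (x : Fin m → ℕ) (c : ℕ) :
    ∑ i, takeVec x c i = min (∑ i, x i) c := by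
  have h1 : ∑ i, takeVec x c i
      = ∑ t ∈ Finset.range m, (min (prefS x (t + 1)) c - min (prefS x t) c) := by
    rw [← Fin.sum_univ_eq_sum_range (fun t => min (prefS x (t + 1)) c - min (prefS x t) c) m]
    exact Finset.sum_congr rfl fun i _ => takeVec_eq x c i
  rw [h1, Finset.sum_range_tsub (f := fun t => min (prefS x t) c)
    (fun s t h => min_le_min (prefS_mono x h) le_rfl)]
  rw [prefS_zero, prefS_top]
  omega

lemma takeVec_top (x : Fin m → ℕ) : takeVec x (∑ i, x i) = x := by
  funext i
  unfold takeVec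
  have h1 : prefS x i.val + x i ≤ ∑ i, x i := by
    rw [← prefS_succ, ← prefS_top]
    exact prefS_mono x i.isLt
  omega

lemma Wsum_mono (w : Fin m → ℕ) {u v : Fin m → ℕ} (h : u ≤ v) : Wsum w u ≤ Wsum w v :=
  Finset.sum_le_sum fun i _ => Nat.mul_le_mul_right _ (h i)

lemma Wsum_sub_add (w : Fin m → ℕ) {u v : Fin m → ℕ} (h : u ≤ v) :
    Wsum w u + Wsum w (v - u) = Wsum w v := by
  unfold Wsum
  rw [← Finset.sum_add_distrib]
  apply Finset.sum_congr rfl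
  intro i _
  have hle : u i ≤ v i := h i
  have hvi : (v - u) i = v i - u i := rfl
  rw [hvi, ← Nat.add_mul, Nat.add_sub_cancel' hle]

lemma sum_sub_add {u v : Fin m → ℕ} (h : u ≤ v) :
    (∑ i, u i) + ∑ i, (v - u) i = ∑ i, v i := by
  rw [← Finset.sum_add_distrib]
  apply Finset.sum_congr rfl
  intro i _
  have hle : u i ≤ v i := h i
  have hvi : (v - u) i = v i - u i := rfl
  omega

lemma Wsum_le (w : Fin m → ℕ) {u : Fin m → ℕ} {R : ℕ} (h : ∀ i, 0 < u i → w i ≤ R) :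
    Wsum w u ≤ R * ∑ i, u i := by
  rw [Finset.mul_sum]
  apply Finset.sum_le_sum
  intro i _
  rcases Nat.eq_zero_or_pos (u i) with h0 | h0
  · simp [h0]
  · rw [mul_comm R]
    exact Nat.mul_le_mul_left _ (h i h0)

lemma le_Wsum (w : Fin m → ℕ) {u : Fin m → ℕ} (h : ∀ i, 0 < u i → 1 ≤ w i) :
    (∑ i, u i) ≤ Wsum w u := by
  apply Finset.sum_le_sum
  intro i _
  rcases Nat.eq_zero_or_pos (u i) with h0 | h0
  · simp [h0]
  · exact Nat.le_mul_of_pos_right _ (h i h0)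

end core
section blocks
variable {m : ℕ}

lemma exists_blocks (w : Fin m → ℕ) (R : ℕ) (x y : Fin m → ℕ)
    (hx1 : ∀ i, 0 < x i → 1 ≤ w i) (hyR : ∀ i, 0 < y i → w i ≤ R)
    (hbig : R + 1 ≤ ∑ i, x i) (hcov : Wsum w x < Wsum w y) :
    ∃ x' y' : Fin m → ℕ, x' ≤ x ∧ y' ≤ y ∧ 0 < ∑ i, x' i ∧ (∑ i, x' i) < ∑ i, x i ∧
      0 < ∑ i, y' i ∧ Wsum w x' = Wsum w y' := by
  set sy := ∑ i, y i with hsy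
  set A : ℕ → ℕ := fun c => Wsum w (takeVec x c) with hA
  set B : ℕ → ℕ := fun c => Wsum w (takeVec y c) with hB
  have hAle : ∀ c, A c ≤ Wsum w x := fun c => Wsum_mono w (takeVec_le x c)
  have hBtop : B sy = Wsum w y := by
    show Wsum w (takeVec y sy) = Wsum w y
    rw [hsy, takeVec_top]
  have hB0 : B 0 = 0 := by
    show Wsum w (takeVec y 0) = 0
    unfold Wsum
    apply Finset.sum_eq_zero
    intro i _
    have : takeVec y 0 i = 0 := by simp [takeVec]
    simp [this]
  have hAcov : ∀ c, A c < B sy := fun c => lt_of_le_of_lt (hAle c) (by omega)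
  set J : ℕ → ℕ := fun c => Nat.findGreatest (fun j => B j ≤ A c) sy with hJ
  have hJ1 : ∀ c, B (J c) ≤ A c := fun c =>
    Nat.findGreatest_spec (P := fun j => B j ≤ A c) (Nat.zero_le sy) (by omega)
  have hJlt : ∀ c, J c < sy := by
    intro c
    have h1 : J c ≤ sy := Nat.findGreatest_le sy
    rcases eq_or_lt_of_le h1 with h2 | h2
    · exfalso
      have := hJ1 c
      rw [h2] at this
      exact absurd this (not_le.mpr (hAcov c))
    · exact h2
  have hBstep : ∀ c, B (c + 1) ≤ B c + R := by
    intro c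
    have hle : takeVec y c ≤ takeVec y (c + 1) := takeVec_mono y (Nat.le_succ c)
    have h1 : B c + Wsum w (takeVec y (c+1) - takeVec y c) = B (c+1) := Wsum_sub_add w hle
    have h2 : (∑ i, takeVec y c i) + (∑ i, (takeVec y (c+1) - takeVec y c) i)
        = ∑ i, takeVec y (c+1) i := sum_sub_add hle
    have h2a : ∑ i, takeVec y c i = min (∑ i, y i) c := sum_takeVec y c
    have h2b : ∑ i, takeVec y (c+1) i = min (∑ i, y i) (c+1) := sum_takeVec y (c+1)
    have h3 : (∑ i, (takeVec y (c+1) - takeVec y c) i) ≤ 1 := by omega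
    have h4 : Wsum w (takeVec y (c+1) - takeVec y c)
        ≤ R * ∑ i, (takeVec y (c+1) - takeVec y c) i := by
      apply Wsum_le
      intro i hi
      apply hyR
      have hd : (takeVec y (c+1) - takeVec y c) i = takeVec y (c+1) i - takeVec y c i := rfl
      rw [hd] at hi
      have hy2 : takeVec y (c+1) i ≤ y i := takeVec_le y (c+1) i
      omega
    have h6 : Wsum w (takeVec y (c+1) - takeVec y c) ≤ R := by
      rcases Nat.le_one_iff_eq_zero_or_eq_one.mp h3 with h | h
      · rw [h, mul_zero] at h4; omega
      · rw [h, mul_one] at h4; exact h4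
    omega
  have hgap : ∀ c, A c < B (J c) + R := by
    intro c
    have h1 : ¬ ((fun j => B j ≤ A c) (J c + 1)) :=
      Nat.findGreatest_is_greatest (P := fun j => B j ≤ A c) (k := J c + 1) (n := sy)
        (Nat.lt_succ_self _) (hJlt c)
    simp only [] at h1
    have h2 : B (J c + 1) ≤ B (J c) + R := hBstep (J c)
    omega
  rcases Nat.eq_zero_or_pos R with hR0 | hRpos
  · exfalso; have := hgap 0; have := hJ1 0; omega
  have hpig : ∃ c ∈ Finset.Icc 1 (∑ i, x i), ∃ c' ∈ Finset.Icc 1 (∑ i, x i),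
      c ≠ c' ∧ A c - B (J c) = A c' - B (J c') := by
    apply Finset.exists_ne_map_eq_of_card_lt_of_maps_to (t := Finset.range R)
    · rw [Nat.card_Icc, Finset.card_range]; omega
    · intro c _
      simp only [Finset.mem_coe, Finset.mem_range]
      have := hgap c
      have := hJ1 c
      omega
  obtain ⟨c, hc, c', hc', hne, heq⟩ := hpig
  have main : ∀ c c', c ∈ Finset.Icc 1 (∑ i, x i) → c' ∈ Finset.Icc 1 (∑ i, x i) → c < c' →
      A c - B (J c) = A c' - B (J c') →
      ∃ x' y' : Fin m → ℕ, x' ≤ x ∧ y' ≤ y ∧ 0 < ∑ i, x' i ∧ (∑ i, x' i) < ∑ i, x i ∧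
        0 < ∑ i, y' i ∧ Wsum w x' = Wsum w y' := by
    clear hc hc' hne heq c c'
    intro c c' hc hc' hlt heq
    rw [Finset.mem_Icc] at hc hc'
    have hkey : A c + B (J c') = A c' + B (J c) := by
      have := hJ1 c; have := hJ1 c'; omega
    set x' : Fin m → ℕ := takeVec x c' - takeVec x c with hx'
    set y' : Fin m → ℕ := takeVec y (J c') - takeVec y (J c) with hy'
    have hlex : takeVec x c ≤ takeVec x c' := takeVec_mono x (le_of_lt hlt)
    have h2 : (∑ i, takeVec x c i) + (∑ i, x' i) = ∑ i, takeVec x c' i := sum_sub_add hlex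
    have h2a : ∑ i, takeVec x c i = min (∑ i, x i) c := sum_takeVec x c
    have h2b : ∑ i, takeVec x c' i = min (∑ i, x i) c' := sum_takeVec x c'
    have hsumx' : (∑ i, x' i) = c' - c := by omega
    have hWx' : A c + Wsum w x' = A c' := Wsum_sub_add w hlex
    have hx'le : ∀ i, x' i ≤ x i := by
      intro i
      have h1 : x' i = takeVec x c' i - takeVec x c i := rfl
      have h2 : takeVec x c' i ≤ x i := takeVec_le x c' i
      omega
    have hx'supp : ∀ i, 0 < x' i → 1 ≤ w i := fun i hi => hx1 i (lt_of_lt_of_le hi (hx'le i))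
    have hsx'pos : 0 < ∑ i, x' i := by omega
    have hWx'ge : (∑ i, x' i) ≤ Wsum w x' := le_Wsum w hx'supp
    have hAcc : A c < A c' := by omega
    have hJcc : J c ≤ J c' := by
      by_contra hcon
      push_neg at hcon
      have h6 : takeVec y (J c') ≤ takeVec y (J c) := takeVec_mono y (le_of_lt hcon)
      have h7 : B (J c') ≤ B (J c) := Wsum_mono w h6
      omega
    have hley : takeVec y (J c) ≤ takeVec y (J c') := takeVec_mono y hJcc
    have hWy' : B (J c) + Wsum w y' = B (J c') := Wsum_sub_add w hley
    have hy'le : ∀ i, y' i ≤ y i := by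
      intro i
      have h1 : y' i = takeVec y (J c') i - takeVec y (J c) i := rfl
      have h2 : takeVec y (J c') i ≤ y i := takeVec_le y (J c') i
      omega
    have hWeq : Wsum w x' = Wsum w y' := by omega
    have hy'pos : 0 < ∑ i, y' i := by
      by_contra hcon
      push_neg at hcon
      have h0 : ∀ i, y' i = 0 := by
        intro i
        exact Finset.sum_eq_zero_iff.mp (Nat.le_zero.mp hcon) i (Finset.mem_univ i)
      have hW0 : Wsum w y' = 0 := Finset.sum_eq_zero (fun i _ => by rw [h0 i]; ring)
      omega
    exact ⟨x', y', Pi.le_def.mpr hx'le, Pi.le_def.mpr hy'le, hsx'pos, by omega, hy'pos, hWeq⟩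
  rcases lt_or_gt_of_ne hne with h | h
  · exact main c c' hc hc' h heq
  · exact main c' c hc' hc h heq.symm

end blocks

section piMhelp
variable (k n : ℕ) (r : Fin (k + 1) → ℕ)

def wtv : Fin (k + 2) → ℕ := Fin.cases 0 r

def stv : Fin (k + 2) → ℕ := Fin.cases (r (Fin.last k)) (fun j => r (Fin.last k) - r j)

lemma piM_eq_wt (v : Fin (k + 2) → ℕ) :
    piM k n r v = vlen v * n + Wsum (wtv k r) v := by
  unfold piM vlen Wsum
  rw [Fin.sum_univ_succ (f := fun i => v i), Fin.sum_univ_succ (f := fun i => v i * wtv k r i)]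
  simp only [wtv, Fin.cases_zero, Fin.cases_succ, mul_zero, zero_add, add_mul, mul_add,
    Finset.sum_add_distrib, Finset.sum_mul]
  ring

lemma piM_st (hle : ∀ i, r i ≤ r (Fin.last k)) (v : Fin (k + 2) → ℕ) :
    piM k n r v + Wsum (stv k r) v = vlen v * (n + r (Fin.last k)) := by
  have key : Wsum (wtv k r) v + Wsum (stv k r) v = (∑ i : Fin (k + 2), v i) * r (Fin.last k) := by
    unfold Wsum
    rw [← Finset.sum_add_distrib, Finset.sum_mul]
    apply Finset.sum_congr rfl
    intro i _
    induction i using Fin.cases with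
    | zero => simp [wtv, stv]
    | succ j =>
        simp only [wtv, stv, Fin.cases_succ]
        rw [← Nat.mul_add, Nat.add_sub_cancel' (hle j)]
  rw [piM_eq_wt, mul_add, add_assoc, key]
  rfl

lemma piM_add (u v : Fin (k + 2) → ℕ) :
    piM k n r (u + v) = piM k n r u + piM k n r v := by
  unfold piM
  simp only [Pi.add_apply, add_mul, Finset.sum_add_distrib]
  ring

lemma piM_sub_add {u zz : Fin (k + 2) → ℕ} (h : ∀ i, u i ≤ zz i) :
    piM k n r (zz - u) + piM k n r u = piM k n r zz := by
  rw [← piM_add]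
  congr 1
  funext i
  have h1 : (zz - u + u) i = (zz i - u i) + u i := rfl
  have h2 := h i
  rw [h1]
  omega

lemma piM_single0 (c : ℕ) : piM k n r (Pi.single (0 : Fin (k + 2)) c) = c * n := by
  unfold piM
  rw [Pi.single_eq_same]
  have h : ∀ i : Fin (k + 1), (Pi.single (0 : Fin (k + 2)) c : Fin (k + 2) → ℕ) i.succ = 0 := by
    intro i
    rw [Pi.single_apply, if_neg (Fin.succ_ne_zero i)]
  simp [h]

lemma piM_singleLast (c : ℕ) :
    piM k n r (Pi.single (Fin.last (k + 1)) c) = c * (n + r (Fin.last k)) := by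
  unfold piM
  have hne : (0 : Fin (k + 2)) ≠ Fin.last (k + 1) := by
    apply Fin.ne_of_val_ne
    simp only [Fin.val_zero, Fin.val_last]
    omega
  have h0 : (Pi.single (Fin.last (k + 1)) c : Fin (k + 2) → ℕ) (0 : Fin (k + 2)) = 0 := by
    rw [Pi.single_apply, if_neg hne]
  rw [h0]
  have hsum : ∑ i : Fin (k + 1), (Pi.single (Fin.last (k + 1)) c : Fin (k + 2) → ℕ) i.succ * (n + r i)
      = c * (n + r (Fin.last k)) := by
    rw [Finset.sum_eq_single (Fin.last k)]
    · rw [Fin.succ_last, Pi.single_eq_same]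
    · intro i _ hne
      have hne' : i.succ ≠ Fin.last (k + 1) := by
        rw [← Fin.succ_last]
        exact fun hc => hne (Fin.succ_injective _ hc)
      rw [Pi.single_apply, if_neg hne', zero_mul]
    · intro h; exact absurd (Finset.mem_univ _) h
  rw [hsum]
  omega

end piMhelp

lemma sameComp_bridge {m : ℕ} (π : (Fin m → ℕ) → ℕ) (β : ℕ) {z z' wf : Fin m → ℕ}
    (hz : π z = β) (hz' : π z' = β) (hw : π wf = β)
    (h1 : ∃ i, 0 < z i ∧ 0 < wf i) (h2 : ∃ i, 0 < wf i ∧ 0 < z' i) :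
    SameComp π β z z' :=
  Relation.ReflTransGen.head ⟨hz, hw, h1⟩ (Relation.ReflTransGen.single ⟨hw, hz', h2⟩)

lemma exists_pos_of_sum_pos {m : ℕ} {u : Fin m → ℕ} (h : 0 < ∑ i, u i) : ∃ i, 0 < u i := by
  by_contra hc
  push_neg at hc
  have h0 : (∑ i, u i) = 0 := Finset.sum_eq_zero fun i _ => Nat.le_zero.mp (hc i)
  omega

lemma exists_lt_of_sums {m : ℕ} {u v : Fin m → ℕ} (h : (∑ i, u i) < ∑ i, v i) :
    ∃ i, u i < v i := by
  by_contra hc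
  push_neg at hc
  have hle : (∑ i, v i) ≤ ∑ i, u i :=
    Finset.sum_le_sum (s := Finset.univ) (fun i _ => hc i)
  omega

lemma exists_lt_of_W {m : ℕ} (w : Fin m → ℕ) {u v : Fin m → ℕ} (hle : ∀ i, u i ≤ v i)
    (h : Wsum w u < Wsum w v) : ∃ i, u i < v i := by
  by_contra hc
  push_neg at hc
  have heq : u = v := funext fun i => le_antisymm (hle i) (hc i)
  rw [heq] at h
  omega

/-- If `n > r_k²`, `β` is a Betti element of `M_n`, and `z, z'` are factorizations of
`β` in different connected components of `∇_β` with `|z| > |z'|`, then `z_0 > 0` and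
`z'_k > 0`. -/
theorem stmt4 (k n : ℕ) (r : Fin (k + 1) → ℕ) (hmono : StrictMono r) (hpos : 0 < r 0)
    (hn : r (Fin.last k) ^ 2 < n)
    (β : ℕ) (hB : IsBetti (piM k n r) β)
    (z z' : Fin (k + 2) → ℕ) (hz : piM k n r z = β) (hz' : piM k n r z' = β)
    (hcomp : ¬ SameComp (piM k n r) β z z') (hlen : vlen z' < vlen z) :
    0 < z 0 ∧ 0 < z' (Fin.last (k + 1)) := by
  have hrl1 : 1 ≤ r (Fin.last k) := le_trans hpos (hmono.monotone (Fin.zero_le _))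
  have hrlr : r (Fin.last k) * r (Fin.last k) < n := by rwa [pow_two] at hn
  have hler : ∀ i, r i ≤ r (Fin.last k) := fun i => hmono.monotone (Fin.le_last i)
  have hwtR : ∀ i : Fin (k + 2), wtv k r i ≤ r (Fin.last k) := by
    intro i
    induction i using Fin.cases with
    | zero => simp [wtv]
    | succ j => simpa [wtv] using hler j
  have e1 : vlen z * n + Wsum (wtv k r) z = β := by rw [← piM_eq_wt]; exact hz
  have e2 : vlen z' * n + Wsum (wtv k r) z' = β := by rw [← piM_eq_wt]; exact hz'
  have hLn : vlen z' * n + n ≤ vlen z * n := by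
    have h : (vlen z' + 1) * n ≤ vlen z * n := Nat.mul_le_mul_right n (Nat.succ_le_of_lt hlen)
    rw [add_mul, one_mul] at h
    exact h
  have hcovW : Wsum (wtv k r) z + n ≤ Wsum (wtv k r) z' := by omega
  have hn1 : 1 ≤ n := by omega
  have ha'le : Wsum (wtv k r) z' ≤ r (Fin.last k) * vlen z' :=
    Wsum_le (wtv k r) (fun i _ => hwtR i)
  have hvlz : vlen z = ∑ i, z i := rfl
  have hvlz' : vlen z' = ∑ i, z' i := rfl
  constructor
  -- PART 1 : 0 < z 0
  · by_contra h0
    have hz0 : z 0 = 0 := by omega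
    have hwt1 : ∀ i, 0 < z i → 1 ≤ wtv k r i := by
      intro i hi
      induction i using Fin.cases with
      | zero => rw [hz0] at hi; omega
      | succ j => simpa [wtv] using le_trans hpos (hmono.monotone (Fin.zero_le j))
    have hLa : vlen z ≤ Wsum (wtv k r) z := le_Wsum (wtv k r) hwt1
    have hbig : r (Fin.last k) + 1 ≤ vlen z := by
      by_contra hLsmall
      push_neg at hLsmall
      have h1 : vlen z' ≤ r (Fin.last k) - 1 := by omega
      have h2 : r (Fin.last k) * vlen z' ≤ r (Fin.last k) * (r (Fin.last k) - 1) :=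
        Nat.mul_le_mul_left _ h1
      have h3 : r (Fin.last k) * (r (Fin.last k) - 1) + r (Fin.last k)
          = r (Fin.last k) * r (Fin.last k) := by
        have h4 : r (Fin.last k) - 1 + 1 = r (Fin.last k) := by omega
        calc r (Fin.last k) * (r (Fin.last k) - 1) + r (Fin.last k)
            = r (Fin.last k) * (r (Fin.last k) - 1 + 1) := by ring
          _ = _ := by rw [h4]
      omega
    obtain ⟨x', y', hx'z, hy'z', hx'pos, hx'lt, hy'pos, hWeq⟩ :=
      exists_blocks (wtv k r) (r (Fin.last k)) z z' hwt1 (fun i _ => hwtR i) hbig (by omega)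
    have hx'zi : ∀ i, x' i ≤ z i := fun i => hx'z i
    have hy'zi : ∀ i, y' i ≤ z' i := fun i => hy'z' i
    have hpx : piM k n r x' = (∑ i, x' i) * n + Wsum (wtv k r) x' := piM_eq_wt k n r x'
    have hpy : piM k n r y' = (∑ i, y' i) * n + Wsum (wtv k r) y' := piM_eq_wt k n r y'
    rcases le_total (∑ i, y' i) (∑ i, x' i) with hcase | hcase
    · set c := (∑ i, x' i) - (∑ i, y' i) with hc
      set wf := (z - x') + y' + Pi.single (0 : Fin (k + 2)) c with hwfdef
      have hw1 : piM k n r wf = piM k n r (z - x') + piM k n r y' + c * n := by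
        rw [hwfdef, piM_add, piM_add, piM_single0]
      have hw2 : piM k n r (z - x') + piM k n r x' = β := by
        rw [piM_sub_add k n r hx'zi]; exact hz
      have hmul : c * n + (∑ i, y' i) * n = (∑ i, x' i) * n := by
        rw [← add_mul]; congr 1; omega
      have hwβ : piM k n r wf = β := by omega
      have hadj1 : ∃ i, 0 < z i ∧ 0 < wf i := by
        obtain ⟨i0, hi0⟩ := exists_lt_of_sums (u := x') (v := z) (by omega)
        refine ⟨i0, by omega, ?_⟩
        have hwi : wf i0 = (z i0 - x' i0) + y' i0
            + (Pi.single (0 : Fin (k + 2)) c : Fin (k + 2) → ℕ) i0 := rfl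
        have := hx'zi i0
        omega
      have hadj2 : ∃ i, 0 < wf i ∧ 0 < z' i := by
        obtain ⟨i1, hi1⟩ := exists_pos_of_sum_pos hy'pos
        refine ⟨i1, ?_, by have := hy'zi i1; omega⟩
        have hwi : wf i1 = (z i1 - x' i1) + y' i1
            + (Pi.single (0 : Fin (k + 2)) c : Fin (k + 2) → ℕ) i1 := rfl
        omega
      exact hcomp (sameComp_bridge (piM k n r) β hz hz' hwβ hadj1 hadj2)
    · set c := (∑ i, y' i) - (∑ i, x' i) with hc
      set wf := (z' - y') + x' + Pi.single (0 : Fin (k + 2)) c with hwfdef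
      have hw1 : piM k n r wf = piM k n r (z' - y') + piM k n r x' + c * n := by
        rw [hwfdef, piM_add, piM_add, piM_single0]
      have hw2 : piM k n r (z' - y') + piM k n r y' = β := by
        rw [piM_sub_add k n r hy'zi]; exact hz'
      have hmul : c * n + (∑ i, x' i) * n = (∑ i, y' i) * n := by
        rw [← add_mul]; congr 1; omega
      have hwβ : piM k n r wf = β := by omega
      have hadj1 : ∃ i, 0 < z i ∧ 0 < wf i := by
        obtain ⟨i1, hi1⟩ := exists_pos_of_sum_pos hx'pos
        refine ⟨i1, by have := hx'zi i1; omega, ?_⟩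
        have hwi : wf i1 = (z' i1 - y' i1) + x' i1
            + (Pi.single (0 : Fin (k + 2)) c : Fin (k + 2) → ℕ) i1 := rfl
        omega
      have hadj2 : ∃ i, 0 < wf i ∧ 0 < z' i := by
        have hWx'z : Wsum (wtv k r) x' ≤ Wsum (wtv k r) z := Wsum_mono (wtv k r) hx'z
        obtain ⟨i0, hi0⟩ := exists_lt_of_W (wtv k r) hy'zi (by omega)
        refine ⟨i0, ?_, by omega⟩
        have hwi : wf i0 = (z' i0 - y' i0) + x' i0
            + (Pi.single (0 : Fin (k + 2)) c : Fin (k + 2) → ℕ) i0 := rfl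
        omega
      exact hcomp (sameComp_bridge (piM k n r) β hz hz' hwβ hadj1 hadj2)
  -- PART 2 : 0 < z' last
  · by_contra h0
    have hz'l : z' (Fin.last (k + 1)) = 0 := by omega
    have e1s : β + Wsum (stv k r) z = vlen z * (n + r (Fin.last k)) := by
      rw [← hz]; exact piM_st k n r hler z
    have e2s : β + Wsum (stv k r) z' = vlen z' * (n + r (Fin.last k)) := by
      rw [← hz']; exact piM_st k n r hler z'
    have hLNs : vlen z' * (n + r (Fin.last k)) + (n + r (Fin.last k))
        ≤ vlen z * (n + r (Fin.last k)) := by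
      have h : (vlen z' + 1) * (n + r (Fin.last k)) ≤ vlen z * (n + r (Fin.last k)) :=
        Nat.mul_le_mul_right _ (Nat.succ_le_of_lt hlen)
      rw [add_mul, one_mul] at h
      exact h
    have hcovS : Wsum (stv k r) z' + 1 ≤ Wsum (stv k r) z := by omega
    have hst1 : ∀ i, 0 < z' i → 1 ≤ stv k r i := by
      intro i hi
      induction i using Fin.cases with
      | zero => simpa [stv] using hrl1
      | succ j =>
        rcases eq_or_ne j (Fin.last k) with hj | hj
        · subst hj
          rw [Fin.succ_last, hz'l] at hi
          omega
        · have hlt : r j < r (Fin.last k) := hmono (lt_of_le_of_ne (Fin.le_last j) hj)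
          simp only [stv, Fin.cases_succ]
          omega
    have hstR : ∀ i : Fin (k + 2), stv k r i ≤ r (Fin.last k) := by
      intro i
      induction i using Fin.cases with
      | zero => simp [stv]
      | succ j => simp only [stv, Fin.cases_succ]; omega
    have hbig2 : r (Fin.last k) + 1 ≤ vlen z' := by
      by_contra hLsmall
      push_neg at hLsmall
      have h2 : r (Fin.last k) * vlen z' ≤ r (Fin.last k) * r (Fin.last k) :=
        Nat.mul_le_mul_left _ (by omega)
      omega
    obtain ⟨x', y', hx'z, hy'z', hx'pos, hx'lt, hy'pos, hWeq⟩ :=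
      exists_blocks (stv k r) (r (Fin.last k)) z' z hst1 (fun i _ => hstR i) hbig2 (by omega)
    have hx'zi : ∀ i, x' i ≤ z' i := fun i => hx'z i
    have hy'zi : ∀ i, y' i ≤ z i := fun i => hy'z' i
    have hpx : piM k n r x' + Wsum (stv k r) x' = (∑ i, x' i) * (n + r (Fin.last k)) :=
      piM_st k n r hler x'
    have hpy : piM k n r y' + Wsum (stv k r) y' = (∑ i, y' i) * (n + r (Fin.last k)) :=
      piM_st k n r hler y'
    rcases le_total (∑ i, x' i) (∑ i, y' i) with hcase | hcase
    · set c := (∑ i, y' i) - (∑ i, x' i) with hc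
      set wf := (z - y') + x' + Pi.single (Fin.last (k + 1)) c with hwfdef
      have hw1 : piM k n r wf = piM k n r (z - y') + piM k n r x'
          + c * (n + r (Fin.last k)) := by
        rw [hwfdef, piM_add, piM_add, piM_singleLast]
      have hw2 : piM k n r (z - y') + piM k n r y' = β := by
        rw [piM_sub_add k n r hy'zi]; exact hz
      have hmul : c * (n + r (Fin.last k)) + (∑ i, x' i) * (n + r (Fin.last k))
          = (∑ i, y' i) * (n + r (Fin.last k)) := by
        rw [← add_mul]; congr 1; omega
      have hwβ : piM k n r wf = β := by omega
      have hadj1 : ∃ i, 0 < z i ∧ 0 < wf i := by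
        have hWx'z : Wsum (stv k r) x' ≤ Wsum (stv k r) z' := Wsum_mono (stv k r) hx'z
        obtain ⟨i0, hi0⟩ := exists_lt_of_W (stv k r) hy'zi (by omega)
        refine ⟨i0, by omega, ?_⟩
        have hwi : wf i0 = (z i0 - y' i0) + x' i0
            + (Pi.single (Fin.last (k + 1)) c : Fin (k + 2) → ℕ) i0 := rfl
        have := hy'zi i0
        omega
      have hadj2 : ∃ i, 0 < wf i ∧ 0 < z' i := by
        obtain ⟨i1, hi1⟩ := exists_pos_of_sum_pos hx'pos
        refine ⟨i1, ?_, by have := hx'zi i1; omega⟩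
        have hwi : wf i1 = (z i1 - y' i1) + x' i1
            + (Pi.single (Fin.last (k + 1)) c : Fin (k + 2) → ℕ) i1 := rfl
        omega
      exact hcomp (sameComp_bridge (piM k n r) β hz hz' hwβ hadj1 hadj2)
    · set c := (∑ i, x' i) - (∑ i, y' i) with hc
      set wf := (z' - x') + y' + Pi.single (Fin.last (k + 1)) c with hwfdef
      have hw1 : piM k n r wf = piM k n r (z' - x') + piM k n r y'
          + c * (n + r (Fin.last k)) := by
        rw [hwfdef, piM_add, piM_add, piM_singleLast]
      have hw2 : piM k n r (z' - x') + piM k n r x' = β := by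
        rw [piM_sub_add k n r hx'zi]; exact hz'
      have hmul : c * (n + r (Fin.last k)) + (∑ i, y' i) * (n + r (Fin.last k))
          = (∑ i, x' i) * (n + r (Fin.last k)) := by
        rw [← add_mul]; congr 1; omega
      have hwβ : piM k n r wf = β := by omega
      have hadj1 : ∃ i, 0 < z i ∧ 0 < wf i := by
        obtain ⟨i1, hi1⟩ := exists_pos_of_sum_pos hy'pos
        refine ⟨i1, by have := hy'zi i1; omega, ?_⟩
        have hwi : wf i1 = (z' i1 - x' i1) + y' i1
            + (Pi.single (Fin.last (k + 1)) c : Fin (k + 2) → ℕ) i1 := rfl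
        omega
      have hadj2 : ∃ i, 0 < wf i ∧ 0 < z' i := by
        obtain ⟨i0, hi0⟩ := exists_lt_of_sums (u := x') (v := z') (by omega)
        refine ⟨i0, ?_, by omega⟩
        have hwi : wf i0 = (z' i0 - x' i0) + y' i0
            + (Pi.single (Fin.last (k + 1)) c : Fin (k + 2) → ℕ) i0 := rfl
        have := hx'zi i0
        omega
      exact hcomp (sameComp_bridge (piM k n r) β hz hz' hwβ hadj1 hadj2)
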